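/- Let B be a unital ℂ-algebra and φ : B → ℂ a unital linear functional. Assume that ker φ contains two linearly independent elements, and that for all f, g, h ∈ ker φ one has φ(fg)·h = φ(gh)·f in B. Then φ is multiplicative: φ(ab) = φ(a)φ(b) for all a, b ∈ B. -/
import Mathlib


theorem statement3 {B : Type*} [Ring B] [Algebra ℂ B]
    (φ : B →ₗ[ℂ] ℂ) (hφ : φ 1 = 1)
    (hdim : ∃ f g : B, φ f = 0 ∧ φ g = 0 ∧ LinearIndependent ℂ ![f, g])
    (hid : ∀ f g h : B, φ f = 0 → φ g = 0 → φ h = 0 →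
      φ (f * g) • h = φ (g * h) • f) :
    ∀ a b : B, φ (a * b) = φ a * φ b := by
  obtain ⟨f₀, g₀, hf₀, hg₀, hli⟩ := hdim
  have hg₀ne : g₀ ≠ 0 := hli.ne_zero 1
  -- Step 1: φ (g * g₀) = 0 for all g in ker φ
  have key1 : ∀ g : B, φ g = 0 → φ (g * g₀) = 0 := by
    intro g hg
    have h := hid f₀ g g₀ hf₀ hg hg₀
    have h' : φ (f₀ * g) • g₀ + (-(φ (g * g₀))) • f₀ = 0 := by
      rw [neg_smul, h]; abel
    have := hli.eq_zero_of_pair (s := -(φ (g * g₀))) (t := φ (f₀ * g))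
      (by rw [add_comm]; exact h')
    simpa using this.1
  -- Step 2: φ (f * g) = 0 for all f, g in ker φ
  have key : ∀ f g : B, φ f = 0 → φ g = 0 → φ (f * g) = 0 := by
    intro f g hf hg
    have h := hid f g g₀ hf hg hg₀
    rw [key1 g hg, zero_smul] at h
    rcases smul_eq_zero.mp h with h | h
    · exact h
    · exact absurd h hg₀ne
  intro a b
  set f := a - (φ a) • 1 with hfdef
  set g := b - (φ b) • 1 with hgdef
  have hf : φ f = 0 := by simp [hfdef, hφ]
  have hg : φ g = 0 := by simp [hgdef, hφ]
  have hab : a * b = f * g + (φ a) • g + (φ b) • f + (φ a * φ b) • 1 := by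
    simp only [hfdef, hgdef]
    rw [sub_mul, mul_sub, mul_sub, smul_sub, smul_sub]
    simp [smul_mul_assoc, mul_smul_comm, smul_smul, mul_comm]
  rw [hab]
  simp [key f g hf hg, hf, hg, hφ]
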